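/- Let (X, d_X) and (Y, d_Y) be non-Archimedean metric spaces such that every ball in X contains at least two distinct points. Then for every λ > 0, the functions β^λ_{X,Y} and β^{*λ}_{X,Y} are non-Archimedean metrics on D♭(X, Y) = {maps P : M♭(X) → Y}: each is nonnegative, vanishes exactly on the diagonal, is symmetric, and satisfies the strong triangle inequality β(P₁, P₃) ≤ max{β(P₁, P₂), β(P₂, P₃)}. -/

import Mathlib

open scoped ENNReal

/-- A ball in a metric space: an open or closed ball of positive radius. -/
def IsBall {X : Type*} [MetricSpace X] (B : Set X) : Prop :=
  ∃ (a : X) (r : ℝ), 0 < r ∧ (B = Metric.ball a r ∨ B = Metric.closedBall a r)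

/-- The type `M♭(X)` of all balls of `X`. -/
abbrev BallSet (X : Type*) [MetricSpace X] := {B : Set X // IsBall B}

-- `β^λ_{X,Y}(P₁,P₂)`: zero if `P₁ = P₂`; otherwise the infimum of those `ε > 0` such that
-- `d_Y(P₁(B), P₂(B^{λε})) ≤ ε` and `d_Y(P₂(B), P₁(B^{λε})) ≤ ε` for every ball `B`, where
-- `B^{δ}` denotes the `δ`-neighborhood (thickening) of `B`, which is again a ball.
open Classical in
noncomputable def betaL {X Y : Type*} [MetricSpace X] [MetricSpace Y]
    (lam : ℝ) (P₁ P₂ : BallSet X → Y) : ℝ≥0∞ :=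
  if P₁ = P₂ then 0 else
    sInf {e : ℝ≥0∞ | ∃ ε : ℝ, 0 < ε ∧ e = ENNReal.ofReal ε ∧
      ∀ B : BallSet X, ∃ B' : BallSet X,
        (B' : Set X) = Metric.thickening (lam * ε) (B : Set X) ∧
        edist (P₁ B) (P₂ B') ≤ ENNReal.ofReal ε ∧
        edist (P₂ B) (P₁ B') ≤ ENNReal.ofReal ε}

/-- `β^{*λ}_{X,Y}(P₁,P₂)`: the infimum of those `ε > 0` such that for every ball `B` there
exist positive `ε_B, ε'_B ≤ ε` with `d_Y(P₁(B), P₂(B^{λε_B})) ≤ ε` and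
`d_Y(P₂(B), P₁(B^{λε'_B})) ≤ ε`. -/
noncomputable def betaStarL {X Y : Type*} [MetricSpace X] [MetricSpace Y]
    (lam : ℝ) (P₁ P₂ : BallSet X → Y) : ℝ≥0∞ :=
  sInf {e : ℝ≥0∞ | ∃ ε : ℝ, 0 < ε ∧ e = ENNReal.ofReal ε ∧
    ∀ B : BallSet X, ∃ εB εB' : ℝ, 0 < εB ∧ εB ≤ ε ∧ 0 < εB' ∧ εB' ≤ ε ∧
      ∃ B' B'' : BallSet X,
        (B' : Set X) = Metric.thickening (lam * εB) (B : Set X) ∧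
        (B'' : Set X) = Metric.thickening (lam * εB') (B : Set X) ∧
        edist (P₁ B) (P₂ B') ≤ ENNReal.ofReal ε ∧
        edist (P₂ B) (P₁ B'') ≤ ENNReal.ofReal ε}

/-- `ρ_s(P₁,P₂) = sup_{B ∈ M♭(X)} d_Y(P₁(B), P₂(B))`. -/
noncomputable def rhoSB {X Y : Type*} [MetricSpace X] [MetricSpace Y]
    (P₁ P₂ : BallSet X → Y) : ℝ≥0∞ :=
  ⨆ B : BallSet X, edist (P₁ B) (P₂ B)

/-- `ρ_H(P₁,P₂)`: the Hausdorff distance between the graphs of `P₁` and `P₂` inside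
`W = M♭(X) × Y` with the sup-metric `max (d_{X,H}, d_Y)`, written out via the
`sup-inf` formula for the Hausdorff distance. -/
noncomputable def rhoHB {X Y : Type*} [MetricSpace X] [MetricSpace Y]
    (P₁ P₂ : BallSet X → Y) : ℝ≥0∞ :=
  max
    (⨆ B : BallSet X, ⨅ B' : BallSet X,
      max (EMetric.hausdorffEdist (B : Set X) (B' : Set X)) (edist (P₁ B) (P₂ B')))
    (⨆ B : BallSet X, ⨅ B' : BallSet X,
      max (EMetric.hausdorffEdist (B : Set X) (B' : Set X)) (edist (P₂ B) (P₁ B')))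

/-- Membership in `D♭^{(1)}(X,Y)`: `d_Y(P(B), P(B^ε)) ≤ ε` for all `ε > 0` and all balls `B`. -/
def memDflatOne {X Y : Type*} [MetricSpace X] [MetricSpace Y] (P : BallSet X → Y) : Prop :=
  ∀ ε : ℝ, 0 < ε → ∀ B B' : BallSet X,
    (B' : Set X) = Metric.thickening ε (B : Set X) → edist (P B) (P B') ≤ ENNReal.ofReal ε

section NAThick
variable {X : Type*} [MetricSpace X]

lemma thickBall (hna : ∀ x y z : X, dist x z ≤ max (dist x y) (dist y z))
    {a : X} {r δ : ℝ} (hr : 0 < r) (hδ : 0 < δ) :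
    Metric.thickening δ (Metric.ball a r) = Metric.ball a (max r δ) := by
  ext x
  rw [Metric.mem_thickening_iff]
  constructor
  · rintro ⟨z, hz, hxz⟩
    rw [Metric.mem_ball] at hz ⊢
    exact lt_of_le_of_lt (hna x z a) (by rw [max_comm r δ]; exact max_lt_max hxz hz)
  · intro hx
    rw [Metric.mem_ball] at hx
    by_cases h : dist x a < δ
    · exact ⟨a, Metric.mem_ball_self hr, h⟩
    · rcases lt_max_iff.mp hx with h' | h'
      · exact ⟨x, Metric.mem_ball.mpr h', by simpa using hδ⟩
      · exact absurd h' h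

lemma thickClosedBallLe (hna : ∀ x y z : X, dist x z ≤ max (dist x y) (dist y z))
    {a : X} {r δ : ℝ} (hδ : 0 < δ) (hδr : δ ≤ r) :
    Metric.thickening δ (Metric.closedBall a r) = Metric.closedBall a r := by
  ext x
  rw [Metric.mem_thickening_iff]
  constructor
  · rintro ⟨z, hz, hxz⟩
    rw [Metric.mem_closedBall] at hz ⊢
    exact (hna x z a).trans (max_le (hxz.le.trans hδr) hz)
  · intro hx
    exact ⟨x, hx, by simpa using hδ⟩

lemma thickClosedBallGt (hna : ∀ x y z : X, dist x z ≤ max (dist x y) (dist y z))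
    {a : X} {r δ : ℝ} (hr : 0 ≤ r) (hrδ : r < δ) :
    Metric.thickening δ (Metric.closedBall a r) = Metric.ball a δ := by
  ext x
  rw [Metric.mem_thickening_iff]
  constructor
  · rintro ⟨z, hz, hxz⟩
    rw [Metric.mem_closedBall] at hz
    rw [Metric.mem_ball]
    exact lt_of_le_of_lt (hna x z a) (max_lt hxz (hz.trans_lt hrδ))
  · intro hx
    exact ⟨a, Metric.mem_closedBall_self hr, Metric.mem_ball.mp hx⟩

lemma isBall_thickening (hna : ∀ x y z : X, dist x z ≤ max (dist x y) (dist y z))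
    {B : Set X} (hB : IsBall B) {δ : ℝ} (hδ : 0 < δ) : IsBall (Metric.thickening δ B) := by
  obtain ⟨a, r, hr, hB | hB⟩ := hB
  · exact ⟨a, max r δ, lt_max_of_lt_left hr, Or.inl (by rw [hB, thickBall hna hr hδ])⟩
  · by_cases h : δ ≤ r
    · exact ⟨a, r, hr, Or.inr (by rw [hB, thickClosedBallLe hna hδ h])⟩
    · exact ⟨a, δ, hδ, Or.inl (by rw [hB, thickClosedBallGt hna hr.le (not_le.mp h)])⟩

lemma thickThick (hna : ∀ x y z : X, dist x z ≤ max (dist x y) (dist y z))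
    {B : Set X} (hB : IsBall B) {δ δ' : ℝ} (hδ : 0 < δ) (hδ' : 0 < δ') :
    Metric.thickening δ' (Metric.thickening δ B) = Metric.thickening (max δ δ') B := by
  obtain ⟨a, r, hr, hB | hB⟩ := hB <;> subst hB
  · rw [thickBall hna hr hδ, thickBall hna (lt_max_of_lt_left hr) hδ',
      thickBall hna hr (lt_max_of_lt_left hδ), max_assoc]
  · by_cases h1 : δ ≤ r
    · rw [thickClosedBallLe hna hδ h1]
      by_cases h2 : δ' ≤ r
      · rw [thickClosedBallLe hna hδ' h2, thickClosedBallLe hna (lt_max_of_lt_left hδ) (max_le h1 h2)]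
      · rw [thickClosedBallGt hna hr.le (not_le.mp h2),
          thickClosedBallGt hna hr.le (lt_max_of_lt_right (not_le.mp h2)),
          max_eq_right (h1.trans (not_le.mp h2).le)]
    · rw [thickClosedBallGt hna hr.le (not_le.mp h1), thickBall hna hδ hδ',
        thickClosedBallGt hna hr.le (lt_max_of_lt_left (not_le.mp h1))]

lemma existsSmallRadius (hna : ∀ x y z : X, dist x z ≤ max (dist x y) (dist y z))
    {B : Set X} (hB : IsBall B) :
    ∃ r : ℝ, 0 < r ∧ ∀ δ : ℝ, 0 < δ → δ ≤ r → Metric.thickening δ B = B := by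
  obtain ⟨a, r, hr, hB | hB⟩ := hB <;> subst hB
  · exact ⟨r, hr, fun δ hδ hδr => by rw [thickBall hna hr hδ, max_eq_left hδr]⟩
  · exact ⟨r, hr, fun δ hδ hδr => thickClosedBallLe hna hδ hδr⟩

end NAThick

section Beta
variable {X Y : Type*} [MetricSpace X] [MetricSpace Y]

lemma edistNA (hnaY : ∀ x y z : Y, dist x z ≤ max (dist x y) (dist y z)) (x y z : Y) :
    edist x z ≤ max (edist x y) (edist y z) := by
  rw [edist_dist, edist_dist, edist_dist]
  refine le_trans (ENNReal.ofReal_le_ofReal (hnaY x y z)) ?_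
  rcases le_total (dist x y) (dist y z) with h | h
  · rw [max_eq_right h]; exact le_max_right _ _
  · rw [max_eq_left h]; exact le_max_left _ _

lemma ofRealMax (a b : ℝ) :
    ENNReal.ofReal (max a b) = max (ENNReal.ofReal a) (ENNReal.ofReal b) := by
  rcases le_total a b with h | h
  · rw [max_eq_right h, max_eq_right (ENNReal.ofReal_le_ofReal h)]
  · rw [max_eq_left h, max_eq_left (ENNReal.ofReal_le_ofReal h)]

def condL (lam ε : ℝ) (P₁ P₂ : BallSet X → Y) : Prop :=
  ∀ B : BallSet X, ∃ B' : BallSet X,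
    (B' : Set X) = Metric.thickening (lam * ε) (B : Set X) ∧
    edist (P₁ B) (P₂ B') ≤ ENNReal.ofReal ε ∧
    edist (P₂ B) (P₁ B') ≤ ENNReal.ofReal ε

def condS (lam ε : ℝ) (P₁ P₂ : BallSet X → Y) : Prop :=
  ∀ B : BallSet X, ∃ εB εB' : ℝ, 0 < εB ∧ εB ≤ ε ∧ 0 < εB' ∧ εB' ≤ ε ∧
    ∃ B' B'' : BallSet X,
      (B' : Set X) = Metric.thickening (lam * εB) (B : Set X) ∧
      (B'' : Set X) = Metric.thickening (lam * εB') (B : Set X) ∧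
      edist (P₁ B) (P₂ B') ≤ ENNReal.ofReal ε ∧
      edist (P₂ B) (P₁ B'') ≤ ENNReal.ofReal ε

lemma betaL_of_ne {lam : ℝ} {P₁ P₂ : BallSet X → Y} (h : P₁ ≠ P₂) :
    betaL lam P₁ P₂ =
      sInf {e : ℝ≥0∞ | ∃ ε : ℝ, 0 < ε ∧ e = ENNReal.ofReal ε ∧ condL lam ε P₁ P₂} := by
  rw [betaL, if_neg h]; rfl

lemma betaS_eq (lam : ℝ) (P₁ P₂ : BallSet X → Y) :
    betaStarL lam P₁ P₂ =
      sInf {e : ℝ≥0∞ | ∃ ε : ℝ, 0 < ε ∧ e = ENNReal.ofReal ε ∧ condS lam ε P₁ P₂} := rfl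

lemma condL_symm {lam ε : ℝ} {P₁ P₂ : BallSet X → Y} (h : condL lam ε P₁ P₂) :
    condL lam ε P₂ P₁ := fun B => by
  obtain ⟨B', h1, h2, h3⟩ := h B; exact ⟨B', h1, h3, h2⟩

lemma condS_symm {lam ε : ℝ} {P₁ P₂ : BallSet X → Y} (h : condS lam ε P₁ P₂) :
    condS lam ε P₂ P₁ := fun B => by
  obtain ⟨a, b, h1, h2, h3, h4, B', B'', h5, h6, h7, h8⟩ := h B
  exact ⟨b, a, h3, h4, h1, h2, B'', B', h6, h5, h8, h7⟩
lemma condL_trans (hnaX : ∀ x y z : X, dist x z ≤ max (dist x y) (dist y z))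
    (hnaY : ∀ x y z : Y, dist x z ≤ max (dist x y) (dist y z))
    {lam : ℝ} (hlam : 0 < lam) {ε₁ ε₂ : ℝ} (hε₁ : 0 < ε₁) (hε₂ : 0 < ε₂)
    {P₁ P₂ P₃ : BallSet X → Y} (h1 : condL lam ε₁ P₁ P₂) (h2 : condL lam ε₂ P₂ P₃) :
    condL lam (max ε₁ ε₂) P₁ P₃ := by
  intro B
  obtain ⟨B₁, hB₁, h11, h12⟩ := h1 B
  obtain ⟨B₂, hB₂, h21, h22⟩ := h2 B₁
  obtain ⟨C, hC, hc1, hc2⟩ := h2 B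
  obtain ⟨C', hC', hc1', hc2'⟩ := h1 C
  have key : (B₂ : Set X) = Metric.thickening (lam * max ε₁ ε₂) (B : Set X) := by
    rw [hB₂, hB₁, thickThick hnaX B.2 (mul_pos hlam hε₁) (mul_pos hlam hε₂),
      mul_max_of_nonneg _ _ hlam.le]
  have keyC : C' = B₂ := by
    refine Subtype.ext ?_
    show (C' : Set X) = (B₂ : Set X)
    rw [hC', hC, thickThick hnaX B.2 (mul_pos hlam hε₂) (mul_pos hlam hε₁), key,
      mul_max_of_nonneg _ _ hlam.le, max_comm]
  refine ⟨B₂, key, ?_, ?_⟩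
  · refine le_trans (edistNA hnaY _ (P₂ B₁) _) (max_le ?_ ?_)
    · exact h11.trans (ENNReal.ofReal_le_ofReal (le_max_left _ _))
    · exact h21.trans (ENNReal.ofReal_le_ofReal (le_max_right _ _))
  · refine le_trans (edistNA hnaY _ (P₂ C) _) (max_le ?_ ?_)
    · exact hc2.trans (ENNReal.ofReal_le_ofReal (le_max_right _ _))
    · exact (keyC ▸ hc2').trans (ENNReal.ofReal_le_ofReal (le_max_left _ _))

lemma condS_trans (hnaX : ∀ x y z : X, dist x z ≤ max (dist x y) (dist y z))
    (hnaY : ∀ x y z : Y, dist x z ≤ max (dist x y) (dist y z))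
    {lam : ℝ} (hlam : 0 < lam) {ε₁ ε₂ : ℝ}
    {P₁ P₂ P₃ : BallSet X → Y} (h1 : condS lam ε₁ P₁ P₂) (h2 : condS lam ε₂ P₂ P₃) :
    condS lam (max ε₁ ε₂) P₁ P₃ := by
  intro B
  obtain ⟨εB, _e1, hεB, hεB1, _, _, B', _B1, hB', _, he1, _⟩ := h1 B
  obtain ⟨δ, _e2, hδ, hδ1, _, _, C, _C1, hC, _, hf1, _⟩ := h2 B'
  obtain ⟨_e3, δ', _, _, hδ', hδ'1, _B2, D, _, hD, _, hg2⟩ := h2 B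
  obtain ⟨_e4, η, _, _, hη, hη1, _B3, D', _, hD', _, hh2⟩ := h1 D
  refine ⟨max εB δ, max δ' η, lt_max_of_lt_left hεB, max_le_max hεB1 hδ1,
    lt_max_of_lt_left hδ', max_le (hδ'1.trans (le_max_right _ _)) (hη1.trans (le_max_left _ _)),
    C, D', ?_, ?_, ?_, ?_⟩
  · rw [hC, hB', thickThick hnaX B.2 (mul_pos hlam hεB) (mul_pos hlam hδ),
      mul_max_of_nonneg _ _ hlam.le]
  · rw [hD', hD, thickThick hnaX B.2 (mul_pos hlam hδ') (mul_pos hlam hη),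
      mul_max_of_nonneg _ _ hlam.le]
  · refine le_trans (edistNA hnaY _ (P₂ B') _) (max_le ?_ ?_)
    · exact he1.trans (ENNReal.ofReal_le_ofReal (le_max_left _ _))
    · exact hf1.trans (ENNReal.ofReal_le_ofReal (le_max_right _ _))
  · refine le_trans (edistNA hnaY _ (P₂ D) _) (max_le ?_ ?_)
    · exact hg2.trans (ENNReal.ofReal_le_ofReal (le_max_right _ _))
    · exact hh2.trans (ENNReal.ofReal_le_ofReal (le_max_left _ _))

lemma condS_self (hnaX : ∀ x y z : X, dist x z ≤ max (dist x y) (dist y z))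
    {lam : ℝ} (hlam : 0 < lam) {ε : ℝ} (hε : 0 < ε) (P : BallSet X → Y) :
    condS lam ε P P := by
  intro B
  obtain ⟨r, hr, hsmall⟩ := existsSmallRadius hnaX B.2
  set εB : ℝ := min ε (r / lam) with hεBdef
  have hεB : 0 < εB := lt_min hε (by positivity)
  have hle : lam * εB ≤ r := by
    calc lam * εB ≤ lam * (r / lam) :=
          mul_le_mul_of_nonneg_left (min_le_right _ _) hlam.le
      _ = r := by field_simp
  have hthick : Metric.thickening (lam * εB) (B : Set X) = (B : Set X) :=
    hsmall _ (mul_pos hlam hεB) hle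
  exact ⟨εB, εB, hεB, min_le_left _ _, hεB, min_le_left _ _, B, B, hthick.symm, hthick.symm,
    by simp, by simp⟩

lemma betaS_self (hnaX : ∀ x y z : X, dist x z ≤ max (dist x y) (dist y z))
    {lam : ℝ} (hlam : 0 < lam) (P : BallSet X → Y) :
    betaStarL lam P P = 0 := by
  refine le_antisymm (le_of_forall_gt_imp_ge_of_dense fun c hc => ?_) (zero_le)
  rcases eq_or_ne c ⊤ with rfl | hne
  · exact le_top
  · have hc' : 0 < c.toReal := ENNReal.toReal_pos hc.ne' hne
    rw [betaS_eq]
    exact sInf_le ⟨c.toReal, hc', (ENNReal.ofReal_toReal hne).symm, condS_self hnaX hlam hc' P⟩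

lemma betaL_pos (hnaX : ∀ x y z : X, dist x z ≤ max (dist x y) (dist y z))
    {lam : ℝ} (hlam : 0 < lam) {P₁ P₂ : BallSet X → Y} (h : P₁ ≠ P₂) :
    betaL lam P₁ P₂ ≠ 0 := by
  rw [betaL_of_ne h]
  obtain ⟨B₀, hB₀⟩ := Function.ne_iff.mp h
  obtain ⟨r₀, hr₀, hsmall⟩ := existsSmallRadius hnaX B₀.2
  set c := min (ENNReal.ofReal (r₀ / lam)) (edist (P₁ B₀) (P₂ B₀)) with hcdef
  have hc : 0 < c := lt_min (ENNReal.ofReal_pos.mpr (by positivity)) (edist_pos.mpr hB₀)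
  have hle : c ≤ sInf {e : ℝ≥0∞ | ∃ ε : ℝ, 0 < ε ∧ e = ENNReal.ofReal ε ∧ condL lam ε P₁ P₂} := by
    refine le_sInf ?_
    rintro e ⟨ε, hε, rfl, hcond⟩
    by_cases hεr : lam * ε ≤ r₀
    · obtain ⟨B', hB', h1, h2⟩ := hcond B₀
      have hBB : B' = B₀ :=
        Subtype.ext (hB'.trans (hsmall _ (mul_pos hlam hε) hεr))
      rw [hBB] at h1
      exact (min_le_right _ _).trans h1
    · refine (min_le_left _ _).trans (ENNReal.ofReal_le_ofReal ?_)
      rw [div_le_iff₀ hlam]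
      push_neg at hεr
      linarith [mul_comm lam ε]
  exact fun h0 => (hc.trans_le (h0 ▸ hle)).ne rfl

lemma betaS_pos (hnaX : ∀ x y z : X, dist x z ≤ max (dist x y) (dist y z))
    {lam : ℝ} (hlam : 0 < lam) {P₁ P₂ : BallSet X → Y} (h : P₁ ≠ P₂) :
    betaStarL lam P₁ P₂ ≠ 0 := by
  rw [betaS_eq]
  obtain ⟨B₀, hB₀⟩ := Function.ne_iff.mp h
  obtain ⟨r₀, hr₀, hsmall⟩ := existsSmallRadius hnaX B₀.2
  set c := min (ENNReal.ofReal (r₀ / lam)) (edist (P₁ B₀) (P₂ B₀)) with hcdef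
  have hc : 0 < c := lt_min (ENNReal.ofReal_pos.mpr (by positivity)) (edist_pos.mpr hB₀)
  have hle : c ≤ sInf {e : ℝ≥0∞ | ∃ ε : ℝ, 0 < ε ∧ e = ENNReal.ofReal ε ∧ condS lam ε P₁ P₂} := by
    refine le_sInf ?_
    rintro e ⟨ε, hε, rfl, hcond⟩
    by_cases hεr : lam * ε ≤ r₀
    · obtain ⟨εB, _, hεB, hεB1, _, _, B', _, hB', _, h1, _⟩ := hcond B₀
      have hεBr : lam * εB ≤ r₀ :=
        le_trans (mul_le_mul_of_nonneg_left hεB1 hlam.le) hεr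
      have hBB : B' = B₀ :=
        Subtype.ext (hB'.trans (hsmall _ (mul_pos hlam hεB) hεBr))
      rw [hBB] at h1
      exact (min_le_right _ _).trans h1
    · refine (min_le_left _ _).trans (ENNReal.ofReal_le_ofReal ?_)
      rw [div_le_iff₀ hlam]
      push_neg at hεr
      linarith [mul_comm lam ε]
  exact fun h0 => (hc.trans_le (h0 ▸ hle)).ne rfl

lemma betaL_symm (lam : ℝ) (P₁ P₂ : BallSet X → Y) :
    betaL lam P₁ P₂ = betaL lam P₂ P₁ := by
  by_cases h : P₁ = P₂
  · rw [h]
  · rw [betaL_of_ne h, betaL_of_ne (Ne.symm h)]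
    congr 1
    ext e
    constructor <;> rintro ⟨ε, hε, rfl, hcond⟩ <;> exact ⟨ε, hε, rfl, condL_symm hcond⟩

lemma betaS_symm (lam : ℝ) (P₁ P₂ : BallSet X → Y) :
    betaStarL lam P₁ P₂ = betaStarL lam P₂ P₁ := by
  rw [betaS_eq, betaS_eq]
  congr 1
  ext e
  constructor <;> rintro ⟨ε, hε, rfl, hcond⟩ <;> exact ⟨ε, hε, rfl, condS_symm hcond⟩

lemma betaL_triangle (hnaX : ∀ x y z : X, dist x z ≤ max (dist x y) (dist y z))
    (hnaY : ∀ x y z : Y, dist x z ≤ max (dist x y) (dist y z))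
    {lam : ℝ} (hlam : 0 < lam) (P₁ P₂ P₃ : BallSet X → Y) :
    betaL lam P₁ P₃ ≤ max (betaL lam P₁ P₂) (betaL lam P₂ P₃) := by
  by_cases h13 : P₁ = P₃
  · rw [betaL, if_pos h13]; exact zero_le
  by_cases h12 : P₁ = P₂
  · rw [h12]; exact le_max_right _ _
  by_cases h23 : P₂ = P₃
  · rw [← h23]; exact le_max_left _ _
  rw [betaL_of_ne h13, betaL_of_ne h12, betaL_of_ne h23]
  refine le_of_forall_gt_imp_ge_of_dense fun c hc => ?_
  obtain ⟨e₁, he₁, hlt₁⟩ := sInf_lt_iff.mp ((le_max_left _ _).trans_lt hc)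
  obtain ⟨e₂, he₂, hlt₂⟩ := sInf_lt_iff.mp ((le_max_right _ _).trans_lt hc)
  obtain ⟨ε₁, hε₁, rfl, hc1⟩ := he₁
  obtain ⟨ε₂, hε₂, rfl, hc2⟩ := he₂
  calc sInf {e : ℝ≥0∞ | ∃ ε : ℝ, 0 < ε ∧ e = ENNReal.ofReal ε ∧ condL lam ε P₁ P₃} ≤
      ENNReal.ofReal (max ε₁ ε₂) :=
        sInf_le ⟨max ε₁ ε₂, lt_max_of_lt_left hε₁, rfl,
          condL_trans hnaX hnaY hlam hε₁ hε₂ hc1 hc2⟩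
    _ = max (ENNReal.ofReal ε₁) (ENNReal.ofReal ε₂) := ofRealMax ε₁ ε₂
    _ ≤ c := (max_lt hlt₁ hlt₂).le

lemma betaS_triangle (hnaX : ∀ x y z : X, dist x z ≤ max (dist x y) (dist y z))
    (hnaY : ∀ x y z : Y, dist x z ≤ max (dist x y) (dist y z))
    {lam : ℝ} (hlam : 0 < lam) (P₁ P₂ P₃ : BallSet X → Y) :
    betaStarL lam P₁ P₃ ≤ max (betaStarL lam P₁ P₂) (betaStarL lam P₂ P₃) := by
  rw [betaS_eq, betaS_eq, betaS_eq]
  refine le_of_forall_gt_imp_ge_of_dense fun c hc => ?_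
  obtain ⟨e₁, he₁, hlt₁⟩ := sInf_lt_iff.mp ((le_max_left _ _).trans_lt hc)
  obtain ⟨e₂, he₂, hlt₂⟩ := sInf_lt_iff.mp ((le_max_right _ _).trans_lt hc)
  obtain ⟨ε₁, hε₁, rfl, hc1⟩ := he₁
  obtain ⟨ε₂, hε₂, rfl, hc2⟩ := he₂
  calc sInf {e : ℝ≥0∞ | ∃ ε : ℝ, 0 < ε ∧ e = ENNReal.ofReal ε ∧ condS lam ε P₁ P₃} ≤
      ENNReal.ofReal (max ε₁ ε₂) :=
        sInf_le ⟨max ε₁ ε₂, lt_max_of_lt_left hε₁, rfl,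
          condS_trans hnaX hnaY hlam hc1 hc2⟩
    _ = max (ENNReal.ofReal ε₁) (ENNReal.ofReal ε₂) := ofRealMax ε₁ ε₂
    _ ≤ c := (max_lt hlt₁ hlt₂).le

end Beta

theorem stmt_15 {X Y : Type*} [MetricSpace X] [MetricSpace Y]
    (hnaX : ∀ x y z : X, dist x z ≤ max (dist x y) (dist y z))
    (hnaY : ∀ x y z : Y, dist x z ≤ max (dist x y) (dist y z))
    (hball : ∀ B : Set X, IsBall B → ∃ x ∈ B, ∃ y ∈ B, x ≠ y)
    (lam : ℝ) (hlam : 0 < lam) :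
    ((∀ P₁ P₂ : BallSet X → Y, 0 ≤ betaL lam P₁ P₂) ∧
     (∀ P₁ P₂ : BallSet X → Y, (betaL lam P₁ P₂ = 0 ↔ P₁ = P₂)) ∧
     (∀ P₁ P₂ : BallSet X → Y, betaL lam P₁ P₂ = betaL lam P₂ P₁) ∧
     (∀ P₁ P₂ P₃ : BallSet X → Y,
       betaL lam P₁ P₃ ≤ max (betaL lam P₁ P₂) (betaL lam P₂ P₃))) ∧
    ((∀ P₁ P₂ : BallSet X → Y, 0 ≤ betaStarL lam P₁ P₂) ∧
     (∀ P₁ P₂ : BallSet X → Y, (betaStarL lam P₁ P₂ = 0 ↔ P₁ = P₂)) ∧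
     (∀ P₁ P₂ : BallSet X → Y, betaStarL lam P₁ P₂ = betaStarL lam P₂ P₁) ∧
     (∀ P₁ P₂ P₃ : BallSet X → Y,
       betaStarL lam P₁ P₃ ≤ max (betaStarL lam P₁ P₂) (betaStarL lam P₂ P₃))) := by
  refine ⟨⟨fun P₁ P₂ => zero_le, fun P₁ P₂ => ?_, betaL_symm lam,
      fun P₁ P₂ P₃ => betaL_triangle hnaX hnaY hlam P₁ P₂ P₃⟩,
    ⟨fun P₁ P₂ => zero_le, fun P₁ P₂ => ?_, betaS_symm lam,
      fun P₁ P₂ P₃ => betaS_triangle hnaX hnaY hlam P₁ P₂ P₃⟩⟩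
  · constructor
    · intro h0
      by_contra hne
      exact betaL_pos hnaX hlam hne h0
    · rintro rfl
      rw [betaL, if_pos rfl]
  · constructor
    · intro h0
      by_contra hne
      exact betaS_pos hnaX hlam hne h0
    · rintro rfl
      exact betaS_self hnaX hlam P₁
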